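/- Let (Z, μ) be a probability space, Ω a finite set, a and b positive integers, and ε > 0. Suppose φ : Z → Ω and Φ : Z → (finite subsets of Ω) are functions such that for every z ∈ Z, |Φ(z)| < a and φ(z) ∈ Φ(z). Then, choosing a function ψ : Ω → Fin b uniformly at random, with probability greater than 1 − √ε the function ψ satisfies: μ{ z ∈ Z : |ψ⁻¹(ψ(φ(z))) ∩ Φ(z)| < 1 + (1/ε)·(a/b) } > 1 − √ε. -/

import Mathlib

open MeasureTheory Finset

open Classical in
lemma aux_pair {Ω : Type*} [Fintype Ω] {b : ℕ} (hb : 0 < b)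
    {ω ω₀ : Ω} (h : ω ≠ ω₀) :
    ((Finset.univ.filter fun ψ : Ω → Fin b => ψ ω = ψ ω₀).card) * b
      = b ^ Fintype.card Ω := by
  haveI : NeZero b := ⟨hb.ne'⟩
  have e : {ψ : Ω → Fin b // ψ ω = ψ ω₀} × Fin b ≃ (Ω → Fin b) :=
  { toFun := fun p => Function.update p.1.1 ω₀ (p.1.1 ω₀ + p.2)
    invFun := fun ψ => (⟨Function.update ψ ω₀ (ψ ω), by
      simp [Function.update_apply, h]⟩, ψ ω₀ - ψ ω)
    left_inv := by
      rintro ⟨⟨ψ, hψ⟩, c⟩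
      refine Prod.ext (Subtype.ext (funext fun x => ?_)) ?_
      · by_cases hx : x = ω₀ <;> simp [Function.update_apply, hx, h, hψ]
      · simp [Function.update_apply, h, hψ]
    right_inv := by
      intro ψ
      funext x
      by_cases hx : x = ω₀ <;> simp [Function.update_apply, hx, h] }
  calc (Finset.univ.filter fun ψ : Ω → Fin b => ψ ω = ψ ω₀).card * b
      = Fintype.card {ψ : Ω → Fin b // ψ ω = ψ ω₀} * Fintype.card (Fin b) := by
        rw [Fintype.card_subtype, Fintype.card_fin]
    _ = Fintype.card ({ψ : Ω → Fin b // ψ ω = ψ ω₀} × Fin b) := (Fintype.card_prod _ _).symm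
    _ = Fintype.card (Ω → Fin b) := Fintype.card_congr e
    _ = b ^ Fintype.card Ω := by simp [Fintype.card_fun]

open Classical in
theorem stmt0 {Z Ω : Type*} [MeasurableSpace Z] (μ : Measure Z) [IsProbabilityMeasure μ]
    [MeasurableSpace Ω] [MeasurableSingletonClass Ω] [Fintype Ω]
    (a b : ℕ) (ha : 0 < a) (hb : 0 < b) (ε : ℝ) (hε : 0 < ε)
    (φ : Z → Ω) (Φ : Z → Finset Ω) (hφ : Measurable φ)
    (hΦ : ∀ s : Finset Ω, MeasurableSet {z | Φ z = s})
    (hcard : ∀ z, (Φ z).card < a) (hmem : ∀ z, φ z ∈ Φ z) :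
    ((Finset.univ.filter (fun ψ : Ω → Fin b =>
        (μ {z | (((Φ z).filter (fun ω => ψ ω = ψ (φ z))).card : ℝ)
            < 1 + (1 / ε) * ((a : ℝ) / (b : ℝ))}).toReal
          > 1 - Real.sqrt ε)).card : ℝ) / (Fintype.card (Ω → Fin b) : ℝ)
      > 1 - Real.sqrt ε := by
  classical
  haveI : NeZero b := ⟨hb.ne'⟩
  set N := Fintype.card (Ω → Fin b) with hNdef
  have hNval : N = b ^ Fintype.card Ω := by simp [hNdef, Fintype.card_fun]
  have hNpos : (0:ℝ) < N := by
    have : 0 < N := Fintype.card_pos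
    exact_mod_cast this
  have hsq : 0 < Real.sqrt ε := Real.sqrt_pos.mpr hε
  have hb' : (0:ℝ) < b := by exact_mod_cast hb
  have ha' : (0:ℝ) < a := by exact_mod_cast ha
  -- Z is nonempty, hence a ≥ 2
  have hZ : Nonempty Z := by
    by_contra hcon
    haveI := not_nonempty_iff.mp hcon
    have h1 : μ Set.univ = 1 := measure_univ
    rw [Set.univ_eq_empty_iff.mpr ‹IsEmpty Z›, measure_empty] at h1
    exact zero_ne_one h1
  obtain ⟨z₀⟩ := hZ
  have ha2 : 2 ≤ a := by
    have h1 : 0 < (Φ z₀).card := Finset.card_pos.mpr ⟨φ z₀, hmem z₀⟩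
    have h2 := hcard z₀
    omega
  set thr : ℝ := 1 / ε * ((a:ℝ) / (b:ℝ)) with hthr
  have hthrpos : 0 < thr := by rw [hthr]; positivity
  set S : (Ω → Fin b) → Set Z := fun ψ =>
    {z | ¬ ((((Φ z).filter (fun ω => ψ ω = ψ (φ z))).card : ℝ) < 1 + thr)} with hS
  have hSmeas : ∀ ψ, MeasurableSet (S ψ) := by
    intro ψ
    have hrw : S ψ = ⋃ s : Finset Ω, ({z | Φ z = s} ∩
        φ ⁻¹' {ω | ¬ (((s.filter (fun ω' => ψ ω' = ψ ω)).card : ℝ) < 1 + thr)}) := by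
      ext z
      simp only [hS, Set.mem_setOf_eq, Set.mem_iUnion, Set.mem_inter_iff, Set.mem_preimage]
      constructor
      · intro hzz; exact ⟨Φ z, rfl, hzz⟩
      · rintro ⟨s, hs, hzz⟩; subst hs; exact hzz
    rw [hrw]
    exact MeasurableSet.iUnion fun s =>
      (hΦ s).inter (hφ ((Set.toFinite _).measurableSet))
  -- pointwise (in z) count of bad ψ's
  have hcount : ∀ z, ((Finset.univ.filter fun ψ : Ω → Fin b => z ∈ S ψ).card : ℝ)
      ≤ ε * (((a:ℝ) - 2) / a) * N := by
    intro z
    set count : (Ω → Fin b) → ℕ := fun ψ => ((Φ z).filter (fun ω => ψ ω = ψ (φ z))).card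
      with hcnt
    have hone : ∀ ψ, 1 ≤ count ψ := fun ψ =>
      Finset.card_pos.mpr ⟨φ z, Finset.mem_filter.mpr ⟨hmem z, rfl⟩⟩
    -- total sum over all ψ
    have htot : ∑ ψ : Ω → Fin b, (count ψ : ℝ) = N + (((Φ z).card : ℝ) - 1) * ((N:ℝ) / b) := by
      have e1 : ∀ ψ : Ω → Fin b, ((count ψ : ℝ))
          = ∑ ω ∈ Φ z, (if ψ ω = ψ (φ z) then (1:ℝ) else 0) := by
        intro ψ; rw [Finset.sum_boole]
      rw [Finset.sum_congr rfl fun ψ _ => e1 ψ, Finset.sum_comm]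
      have e2 : ∀ ω ∈ Φ z, (∑ ψ : Ω → Fin b, if ψ ω = ψ (φ z) then (1:ℝ) else 0)
          = ((Finset.univ.filter fun ψ : Ω → Fin b => ψ ω = ψ (φ z)).card : ℝ) := by
        intro ω _; rw [Finset.sum_boole]
      rw [Finset.sum_congr rfl e2, ← Finset.add_sum_erase _ _ (hmem z)]
      have e3 : (Finset.univ.filter fun ψ : Ω → Fin b => ψ (φ z) = ψ (φ z)) = Finset.univ := by
        simp
      have e4 : ∀ ω ∈ (Φ z).erase (φ z),
          ((Finset.univ.filter fun ψ : Ω → Fin b => ψ ω = ψ (φ z)).card : ℝ) = (N:ℝ) / b := by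
        intro ω hω
        have hne : ω ≠ φ z := Finset.ne_of_mem_erase hω
        have := aux_pair hb hne
        rw [eq_div_iff hb'.ne']
        rw [hNval]
        exact_mod_cast this
      rw [Finset.sum_congr rfl e4, Finset.sum_const, Finset.card_erase_of_mem (hmem z),
        nsmul_eq_mul, e3]
      have : (((Φ z).card - 1 : ℕ) : ℝ) = ((Φ z).card : ℝ) - 1 := by
        have := hone  -- card Φ z ≥ 1
        have h1 : 1 ≤ (Φ z).card := Finset.card_pos.mpr ⟨φ z, hmem z⟩
        rw [Nat.cast_sub h1, Nat.cast_one]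
      rw [this]
      simp [hNdef]
  -- Markov over ψ for fixed z
    set T := Finset.univ.filter fun ψ : Ω → Fin b => z ∈ S ψ with hT
    have hmark : (T.card : ℝ) * thr ≤ ∑ ψ : Ω → Fin b, ((count ψ : ℝ) - 1) := by
      calc (T.card : ℝ) * thr = ∑ _ψ ∈ T, thr := by rw [Finset.sum_const, nsmul_eq_mul]
        _ ≤ ∑ ψ ∈ T, ((count ψ : ℝ) - 1) := by
            refine Finset.sum_le_sum fun ψ hψ => ?_
            have hzS : z ∈ S ψ := (Finset.mem_filter.mp hψ).2
            have : ¬ ((count ψ : ℝ) < 1 + thr) := hzS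
            linarith [not_lt.mp this]
        _ ≤ ∑ ψ : Ω → Fin b, ((count ψ : ℝ) - 1) := by
            refine Finset.sum_le_sum_of_subset_of_nonneg (Finset.subset_univ T) fun ψ _ _ => ?_
            have := hone ψ
            have : (1:ℝ) ≤ (count ψ : ℝ) := by exact_mod_cast this
            linarith
    have hsub : ∑ ψ : Ω → Fin b, ((count ψ : ℝ) - 1)
        = (((Φ z).card : ℝ) - 1) * ((N:ℝ) / b) := by
      rw [Finset.sum_sub_distrib, htot, Finset.sum_const, Finset.card_univ, nsmul_eq_mul,
        mul_one, ← hNdef]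
      ring_nf
    have hcle : (((Φ z).card : ℝ) - 1) ≤ (a:ℝ) - 2 := by
      have : (Φ z).card + 1 ≤ a := hcard z
      have : ((Φ z).card : ℝ) + 1 ≤ (a:ℝ) := by exact_mod_cast this
      linarith
    have hNb : (0:ℝ) ≤ (N:ℝ) / b := by positivity
    have hkey : (T.card : ℝ) * thr ≤ ((a:ℝ) - 2) * ((N:ℝ) / b) := by
      calc (T.card : ℝ) * thr ≤ (((Φ z).card : ℝ) - 1) * ((N:ℝ) / b) := by rw [← hsub]; exact hmark
        _ ≤ ((a:ℝ) - 2) * ((N:ℝ) / b) := mul_le_mul_of_nonneg_right hcle hNb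
    have hiden : (ε * (((a:ℝ) - 2) / a) * N) * thr = ((a:ℝ) - 2) * ((N:ℝ) / b) := by
      rw [hthr]; field_simp
    have : (T.card : ℝ) * thr ≤ (ε * (((a:ℝ) - 2) / a) * N) * thr := by
      rw [hiden]; exact hkey
    exact le_of_mul_le_mul_right this hthrpos
  -- expected bad measure over ψ
  have hsum : ∑ ψ : Ω → Fin b, (μ (S ψ)).toReal ≤ ε * (((a:ℝ) - 2) / a) * N := by
    have e1 : ∀ ψ : Ω → Fin b, (μ (S ψ)).toReal
        = ∫ z, (S ψ).indicator (fun _ => (1:ℝ)) z ∂μ := by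
      intro ψ
      rw [MeasureTheory.integral_indicator_const (1:ℝ) (hSmeas ψ), smul_eq_mul, mul_one]; rfl
    rw [Finset.sum_congr rfl fun ψ _ => e1 ψ,
      ← MeasureTheory.integral_finset_sum _ fun ψ _ =>
        (MeasureTheory.integrable_const (1:ℝ)).indicator (hSmeas ψ)]
    have hle : ∫ z, (∑ ψ : Ω → Fin b, (S ψ).indicator (fun _ => (1:ℝ)) z) ∂μ
        ≤ ∫ _z, ε * (((a:ℝ) - 2) / a) * N ∂μ := by
      refine MeasureTheory.integral_mono
        (MeasureTheory.integrable_finset_sum _ fun ψ _ =>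
          (MeasureTheory.integrable_const (1:ℝ)).indicator (hSmeas ψ))
        (MeasureTheory.integrable_const _) fun z => ?_
      have : ∑ ψ : Ω → Fin b, (S ψ).indicator (fun _ => (1:ℝ)) z
          = ((Finset.univ.filter fun ψ : Ω → Fin b => z ∈ S ψ).card : ℝ) := by
        rw [← Finset.sum_boole]
        exact Finset.sum_congr rfl fun ψ _ => Set.indicator_apply _ _ _
      simpa [this] using hcount z
    simpa [MeasureTheory.integral_const] using hle
  -- Markov over ψ
  set Bad := Finset.univ.filter fun ψ : Ω → Fin b => Real.sqrt ε ≤ (μ (S ψ)).toReal with hBad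
  have hBadcard : (Bad.card : ℝ) < Real.sqrt ε * N := by
    have h1 : (Bad.card : ℝ) * Real.sqrt ε ≤ ∑ ψ : Ω → Fin b, (μ (S ψ)).toReal := by
      calc (Bad.card : ℝ) * Real.sqrt ε = ∑ _ψ ∈ Bad, Real.sqrt ε := by
            rw [Finset.sum_const, nsmul_eq_mul]
        _ ≤ ∑ ψ ∈ Bad, (μ (S ψ)).toReal :=
            Finset.sum_le_sum fun ψ hψ => (Finset.mem_filter.mp hψ).2
        _ ≤ ∑ ψ : Ω → Fin b, (μ (S ψ)).toReal :=
            Finset.sum_le_sum_of_subset_of_nonneg (Finset.subset_univ _)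
              fun ψ _ _ => ENNReal.toReal_nonneg
    have h2 : ε * (((a:ℝ) - 2) / a) * N < ε * N := by
      have hlt : ((a:ℝ) - 2) / a < 1 := by rw [div_lt_one ha']; linarith
      have hpos : (0:ℝ) < ε * N := by positivity
      nlinarith
    have h3 : (Bad.card : ℝ) * Real.sqrt ε < (Real.sqrt ε * N) * Real.sqrt ε := by
      have : (Real.sqrt ε * N) * Real.sqrt ε = ε * N := by
        rw [mul_comm (Real.sqrt ε) (N:ℝ), mul_assoc, Real.mul_self_sqrt hε.le]; ring
      rw [this]
      exact lt_of_le_of_lt (h1.trans hsum) h2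
    exact lt_of_mul_lt_mul_right h3 hsq.le
  -- identify the goal filter with the complement of Bad
  have hGoodEq : (Finset.univ.filter (fun ψ : Ω → Fin b =>
        (μ {z | (((Φ z).filter (fun ω => ψ ω = ψ (φ z))).card : ℝ)
            < 1 + thr}).toReal > 1 - Real.sqrt ε))
      = Finset.univ.filter (fun ψ : Ω → Fin b => ¬ Real.sqrt ε ≤ (μ (S ψ)).toReal) := by
    refine Finset.filter_congr fun ψ _ => ?_
    have hc : {z | (((Φ z).filter (fun ω => ψ ω = ψ (φ z))).card : ℝ) < 1 + thr}
        = (S ψ)ᶜ := by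
      ext z; simp [hS]
    rw [hc, prob_compl_eq_one_sub (hSmeas ψ),
      ENNReal.toReal_sub_of_le prob_le_one ENNReal.one_ne_top, ENNReal.toReal_one]
    constructor
    · intro h; simp only [not_le]; linarith
    · intro h; simp only [not_le] at h; linarith
  rw [hGoodEq]
  have hsplit : Bad.card + (Finset.univ.filter (fun ψ : Ω → Fin b =>
      ¬ Real.sqrt ε ≤ (μ (S ψ)).toReal)).card = N := by
    rw [hBad]
    rw [Finset.card_filter_add_card_filter_not]
    exact Finset.card_univ
  have hGc : ((Finset.univ.filter (fun ψ : Ω → Fin b =>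
      ¬ Real.sqrt ε ≤ (μ (S ψ)).toReal)).card : ℝ) = (N:ℝ) - Bad.card := by
    have := hsplit
    have : (Bad.card : ℝ) + ((Finset.univ.filter (fun ψ : Ω → Fin b =>
        ¬ Real.sqrt ε ≤ (μ (S ψ)).toReal)).card : ℝ) = (N:ℝ) := by exact_mod_cast this
    linarith
  rw [hGc, gt_iff_lt, lt_div_iff₀ hNpos]
  nlinarith
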